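/- Fix α ∈ ℝ. On (0, ∞) set t(z) := (1 + z²)^{−1/2}, and define q_{−2}(z) := −(1 + 1/z²), q_{−1}(z) := −2α/z², q_0(z) := (1/4 − α²)/z², S_{−1}(z) := √(−q_{−2}(z)) = √(1 + z²)/z, S_0(z) := −q_{−1}(z)/(2 S_{−1}(z)) − S_{−1}′(z)/(2 S_{−1}(z)), and S_1(z) := −( q_0(z) + S_0′(z) + S_0(z)² ) / (2 S_{−1}(z)). Then for every z > 0, S_1(z) equals the derivative with respect to z of C_1(z, α) := t(z)/8 − α² t(z)/2 − α t(z)²/2 − 5 t(z)³/24. -/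

import Mathlib

/-- `q_{−2}(z) = −(1 + 1/z²)` of the Bessel Riccati recursion. -/
noncomputable def qm2 (z : ℝ) : ℝ := -(1 + 1 / z ^ 2)

/-- `q_{−1}(z) = −2α/z²` of the Bessel Riccati recursion. -/
noncomputable def qm1 (α z : ℝ) : ℝ := -(2 * α) / z ^ 2

/-- `q_0(z) = (1/4 − α²)/z²` of the Bessel Riccati recursion. -/
noncomputable def q0 (α z : ℝ) : ℝ := (1 / 4 - α ^ 2) / z ^ 2

/-- `S_{−1}(z) = √(−q_{−2}(z))`. -/
noncomputable def Sm1 (z : ℝ) : ℝ := Real.sqrt (-qm2 z)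

/-- `S_0(z) = −q_{−1}(z)/(2S_{−1}(z)) − S_{−1}′(z)/(2S_{−1}(z))`. -/
noncomputable def S0 (α z : ℝ) : ℝ :=
  -qm1 α z / (2 * Sm1 z) - deriv Sm1 z / (2 * Sm1 z)

/-- `S_1(z) = −(q_0(z) + S_0′(z) + S_0(z)²)/(2S_{−1}(z))`. -/
noncomputable def S1 (α z : ℝ) : ℝ :=
  -(q0 α z + deriv (S0 α) z + S0 α z ^ 2) / (2 * Sm1 z)

/-- `C_1(z,α) = t/8 − α²t/2 − αt²/2 − 5t³/24` with `t = (1+z²)^{−1/2}`. -/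
noncomputable def C1 (α z : ℝ) : ℝ :=
  (1 + z ^ 2) ^ (-(1 / 2) : ℝ) / 8 - α ^ 2 * (1 + z ^ 2) ^ (-(1 / 2) : ℝ) / 2 -
    α * ((1 + z ^ 2) ^ (-(1 / 2) : ℝ)) ^ 2 / 2 - 5 * ((1 + z ^ 2) ^ (-(1 / 2) : ℝ)) ^ 3 / 24

lemma one_add_sq_pos (x : ℝ) : 0 < 1 + x ^ 2 := by positivity
lemma sqrt1_pos (x : ℝ) : 0 < Real.sqrt (1 + x ^ 2) := Real.sqrt_pos.2 (one_add_sq_pos x)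
lemma sqrt1_sq (x : ℝ) : Real.sqrt (1 + x ^ 2) ^ 2 = 1 + x ^ 2 := Real.sq_sqrt (one_add_sq_pos x).le

lemma Sm1_eq (z : ℝ) (hz : 0 < z) : Sm1 z = Real.sqrt (1 + z ^ 2) / z := by
  unfold Sm1 qm2
  rw [neg_neg]
  have h : 1 + 1 / z ^ 2 = (1 + z ^ 2) / z ^ 2 := by field_simp; ring
  rw [h, Real.sqrt_div (one_add_sq_pos z).le, Real.sqrt_sq hz.le]

lemma hasDerivAt_sqrt1 (x : ℝ) :
    HasDerivAt (fun y : ℝ => Real.sqrt (1 + y ^ 2)) (x / Real.sqrt (1 + x ^ 2)) x := by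
  have h : HasDerivAt (fun y : ℝ => 1 + y ^ 2) (2 * x) x := by
    simpa using (hasDerivAt_pow 2 x).const_add 1
  have h2 := h.sqrt (one_add_sq_pos x).ne'
  convert h2 using 1
  rw [eq_div_iff (by positivity)]
  field_simp

lemma deriv_Sm1 (z : ℝ) (hz : 0 < z) :
    deriv Sm1 z = -1 / (Real.sqrt (1 + z ^ 2) * z ^ 2) := by
  have hev : Sm1 =ᶠ[nhds z] fun x => Real.sqrt (1 + x ^ 2) / x := by
    filter_upwards [eventually_gt_nhds hz] with x hx using Sm1_eq x hx
  rw [hev.deriv_eq]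
  have h := (hasDerivAt_sqrt1 z).div (hasDerivAt_id z) hz.ne'
  simp only [id] at h
  rw [show deriv (fun x => Real.sqrt (1 + x ^ 2) / x) z = _ from h.deriv]
  have hs := sqrt1_sq z
  have hsp := sqrt1_pos z
  field_simp
  ring_nf
  linear_combination (-1 : ℝ) * hs

lemma S0_eq (α z : ℝ) (hz : 0 < z) :
    S0 α z = α / (z * Real.sqrt (1 + z ^ 2)) + 1 / (2 * z * (1 + z ^ 2)) := by
  unfold S0 qm1
  rw [deriv_Sm1 z hz, Sm1_eq z hz]
  have hs := sqrt1_sq z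
  have hsp := sqrt1_pos z
  field_simp
  ring_nf
  linear_combination (-1 : ℝ) * hs

lemma deriv_S0 (α z : ℝ) (hz : 0 < z) :
    deriv (S0 α) z = -(α * (1 + 2 * z ^ 2)) / (z ^ 2 * Real.sqrt (1 + z ^ 2) ^ 3)
      - (1 + 3 * z ^ 2) / (2 * z ^ 2 * (1 + z ^ 2) ^ 2) := by
  have hs := sqrt1_sq z
  have hsp := sqrt1_pos z
  have hev : S0 α =ᶠ[nhds z]
      fun x => α / (x * Real.sqrt (1 + x ^ 2)) + 1 / (2 * x * (1 + x ^ 2)) := by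
    filter_upwards [eventually_gt_nhds hz] with x hx using S0_eq α x hx
  rw [hev.deriv_eq]
  have h1 : HasDerivAt (fun x : ℝ => x * Real.sqrt (1 + x ^ 2))
      (1 * Real.sqrt (1 + z ^ 2) + z * (z / Real.sqrt (1 + z ^ 2))) z :=
    (hasDerivAt_id z).mul (hasDerivAt_sqrt1 z)
  have hA := (hasDerivAt_const z α).div h1 (by positivity)
  have h2 : HasDerivAt (fun x : ℝ => 2 * x * (1 + x ^ 2))
      (2 * 1 * (1 + z ^ 2) + 2 * z * (2 * z)) z := by
    have := ((hasDerivAt_id z).const_mul 2).mul ((hasDerivAt_pow 2 z).const_add 1)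
    simp at this ⊢
    exact this
  have hB := (hasDerivAt_const z (1 : ℝ)).div h2 (by positivity)
  have hf := hA.add hB
  rw [show deriv (fun x => α / (x * Real.sqrt (1 + x ^ 2)) + 1 / (2 * x * (1 + x ^ 2))) z = _ from hf.deriv]
  field_simp
  ring_nf
  linear_combination (-4 * z ^ 2 * α - 2 * z ^ 4 * α - 2 * α) * hs

lemma rpow_half_eq (x : ℝ) : (1 + x ^ 2) ^ (-(1 / 2) : ℝ) = (Real.sqrt (1 + x ^ 2))⁻¹ := by
  rw [Real.rpow_neg (one_add_sq_pos x).le, Real.sqrt_eq_rpow]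

lemma deriv_C1 (α z : ℝ) :
    deriv (C1 α) z =
      (-(z / Real.sqrt (1 + z ^ 2)) / Real.sqrt (1 + z ^ 2) ^ 2) / 8
      - α ^ 2 * ((-(z / Real.sqrt (1 + z ^ 2)) / Real.sqrt (1 + z ^ 2) ^ 2)) / 2
      - α * (2 * (Real.sqrt (1 + z ^ 2))⁻¹ ^ 1 *
          (-(z / Real.sqrt (1 + z ^ 2)) / Real.sqrt (1 + z ^ 2) ^ 2)) / 2
      - 5 * (3 * (Real.sqrt (1 + z ^ 2))⁻¹ ^ 2 *
          (-(z / Real.sqrt (1 + z ^ 2)) / Real.sqrt (1 + z ^ 2) ^ 2)) / 24 := by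
  have hC : C1 α = fun x => (Real.sqrt (1 + x ^ 2))⁻¹ / 8
      - α ^ 2 * (Real.sqrt (1 + x ^ 2))⁻¹ / 2
      - α * ((Real.sqrt (1 + x ^ 2))⁻¹) ^ 2 / 2
      - 5 * ((Real.sqrt (1 + x ^ 2))⁻¹) ^ 3 / 24 := by
    funext x; unfold C1; rw [rpow_half_eq]
  rw [hC]
  have hinv : HasDerivAt (fun x : ℝ => (Real.sqrt (1 + x ^ 2))⁻¹)
      (-(z / Real.sqrt (1 + z ^ 2)) / Real.sqrt (1 + z ^ 2) ^ 2) z :=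
    (hasDerivAt_sqrt1 z).inv (sqrt1_pos z).ne'
  have hg := (((hinv.div_const 8).sub ((hinv.const_mul (α ^ 2)).div_const 2)).sub
      (((hinv.pow 2).const_mul α).div_const 2)).sub
      (((hinv.pow 3).const_mul 5).div_const 24)
  rw [show deriv (fun x => (Real.sqrt (1 + x ^ 2))⁻¹ / 8
        - α ^ 2 * (Real.sqrt (1 + x ^ 2))⁻¹ / 2
        - α * ((Real.sqrt (1 + x ^ 2))⁻¹) ^ 2 / 2
        - 5 * ((Real.sqrt (1 + x ^ 2))⁻¹) ^ 3 / 24) z = _ from hg.deriv]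
  ring

/-- `S_{−1}(z) = √(1+z²)/z` and `S_1(z) = dC_1(z,α)/dz` for `z > 0`. -/
theorem stmt_14 (α : ℝ) :
    ∀ z : ℝ, 0 < z →
      Sm1 z = Real.sqrt (1 + z ^ 2) / z ∧
      S1 α z = deriv (C1 α) z := by
  intro z hz
  refine ⟨Sm1_eq z hz, ?_⟩
  have hs := sqrt1_sq z
  have hsp := sqrt1_pos z
  rw [deriv_C1]
  unfold S1 q0
  rw [deriv_S0 α z hz, S0_eq α z hz, Sm1_eq z hz]
  field_simp
  ring_nf
  linear_combination ((-3072 * α ^ 1 * Real.sqrt (1 + z ^ 2) ^ 1) + (3072 * α ^ 2 * Real.sqrt (1 + z ^ 2) ^ 2) + (3840 * z ^ 2) + (-3072 * α ^ 1 * z ^ 2 * Real.sqrt (1 + z ^ 2) ^ 1) + (3072 * z ^ 2 * Real.sqrt (1 + z ^ 2) ^ 2) + (6144 * α ^ 2 * z ^ 2 * Real.sqrt (1 + z ^ 2) ^ 2) + (3840 * z ^ 4) + (-768 * z ^ 4 * Real.sqrt (1 + z ^ 2) ^ 2) + (3072 * α ^ 2 * z ^ 4 * Real.sqrt (1 + z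 ^ 2) ^ 2)) * hs
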